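/- arXiv:2101.07258 — 3 statements merged into one kernel-verified Lean document; each statement's English description precedes it below -/
import Mathlib

section
/- A quasiloopoid G over M satisfies the unities associativity condition (whenever one of x, y, z is a unit and one side of (xy)z = x(yz) is defined, both sides are defined and equal) if and only if α(gh) = α(g) and β(gh) = β(h) for every composable pair (g,h). -/
/-- A (algebraic) quasiloopoid over `M`:  `G` with `α, β : G → G` taking values in the
set of units `M ⊆ G`, a (total representation of the partial) multiplication `mul`,
where `mul g h` is *defined* exactly when `β g = α h`; units satisfy `α m = β m = m`,
`g * β g = g` and `α h * h = h`.  The *unities associativity* condition says: whenever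
one of `x, y, z` is a unit and one side of `(x y) z = x (y z)` is defined, then both
sides are defined and equal.  Theorem: a quasiloopoid satisfies unities associativity
iff `α (g h) = α g` and `β (g h) = β h` for every composable pair `(g, h)`. -/
theorem quasiloopoid_unities_assoc_iff_anchor
    {G : Type*} (M : Set G) (α β : G → G) (mul : G → G → G)
    (h_α_mem : ∀ g, α g ∈ M) (h_β_mem : ∀ g, β g ∈ M)
    (h_unit : ∀ m ∈ M, α m = m ∧ β m = m)
    (h_runit : ∀ g, mul g (β g) = g)
    (h_lunit : ∀ h, mul (α h) h = h) :
    (∀ x y z : G, (x ∈ M ∨ y ∈ M ∨ z ∈ M) →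
        ((β x = α y ∧ β (mul x y) = α z) ∨ (β y = α z ∧ β x = α (mul y z))) →
        ((β x = α y ∧ β (mul x y) = α z) ∧ (β y = α z ∧ β x = α (mul y z)) ∧
          mul (mul x y) z = mul x (mul y z)))
      ↔
    (∀ g h : G, β g = α h → α (mul g h) = α g ∧ β (mul g h) = β h) := by
  constructor
  · intro H g h hgh
    constructor
    · -- use x = α g, y = g, z = h
      have hx := h_unit (α g) (h_α_mem g)
      have h1 : β (α g) = α g := hx.2
      have := H (α g) g h (Or.inl (h_α_mem g))
        (Or.inl ⟨h1, by rw [h_lunit g]; exact hgh⟩)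
      have h2 := this.2.1.2
      rw [h1] at h2
      exact h2.symm
    · -- use x = g, y = h, z = β h
      have hz := h_unit (β h) (h_β_mem h)
      have := H g h (β h) (Or.inr (Or.inr (h_β_mem h)))
        (Or.inr ⟨hz.1.symm, by rw [h_runit h]; exact hgh⟩)
      have h2 := this.1.2
      rw [hz.1] at h2
      exact h2
  · intro H x y z hmem hdef
    -- anchor conditions
    have key : β x = α y ∧ β y = α z := by
      rcases hdef with ⟨h1, h2⟩ | ⟨h1, h2⟩
      · exact ⟨h1, by rw [← (H x y h1).2]; exact h2⟩
      · exact ⟨by rw [← (H y z h1).1]; exact h2, h1⟩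
    obtain ⟨hxy, hyz⟩ := key
    have hA := H x y hxy
    have hB := H y z hyz
    refine ⟨⟨hxy, by rw [hA.2]; exact hyz⟩, ⟨hyz, by rw [hB.1]; exact hxy⟩, ?_⟩
    rcases hmem with hm | hm | hm
    · -- x is a unit : x = β x = α y, so mul x y = y
      have hu := h_unit x hm
      have hx : x = α y := by rw [← hxy, hu.2]
      have e1 : mul x y = y := by rw [hx, h_lunit]
      have e2 : mul x (mul y z) = mul y z := by
        have : x = α (mul y z) := by rw [hB.1, ← hx]
        rw [this, h_lunit]
      rw [e1, e2]
    · -- y is a unit : y = β x and y = α z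
      have hu := h_unit y hm
      have hy1 : y = β x := by rw [hxy, hu.1]
      have hy2 : y = α z := by rw [← hyz, hu.2]
      have e1 : mul x y = x := by rw [hy1, h_runit]
      have e2 : mul y z = z := by rw [hy2, h_lunit]
      rw [e1, e2]
    · -- z is a unit : z = β y = β (mul x y)
      have hu := h_unit z hm
      have hz : z = β y := by rw [hyz, hu.1]
      have e1 : mul y z = y := by rw [hz, h_runit]
      have e2 : mul (mul x y) z = mul x y := by
        have : z = β (mul x y) := by rw [hA.2, ← hz]
        rw [this, h_runit]
      rw [e1, e2]
end

section
/- Let G' be a loop with unit e and N a set. Then G = G' × N × N with source α(x,s,t) = (e,s,s), target β(x,s,t) = (e,t,t), unit set M = {(e,s,s) : s ∈ N}, and multiplication (x,s,t)•(y,t,r) = (xy,s,r) is a loopoid: units act as identities, α(g•h) = α(g), β(g•h) = β(h), and left/right translations between the corresponding fibers are bijections. Moreover, if G' is an inverse loop, then ι(x,s,t) = (x⁻¹,t,s) makes G an I.P. loopoid. -/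
/-- Let `G'` be a loop with unit `e` and `N` a set.  Then `G = G' × N × N` with
source `α (x,s,t) = (e,s,s)`, target `β (x,s,t) = (e,t,t)`, units
`M = {(e,s,s) : s ∈ N}`, and multiplication `(x,s,t) • (y,t,r) = (x y, s, r)`
(composable iff `t = t'`, i.e. `β g = α h`) is a loopoid: units act as identities,
`α (g • h) = α g`, `β (g • h) = β h`, and left/right translations between the
corresponding fibers are bijections.  Moreover, if `G'` is an inverse loop with
inversion `inv'`, then `ι (x,s,t) = (inv' x, t, s)` makes `G` an I.P. loopoid. -/
theorem loop_times_pair_groupoid_is_loopoid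
    {G' N : Type*} (mul' : G' → G' → G') (e : G')
    (h_id_left : ∀ a, mul' e a = a)
    (h_id_right : ∀ a, mul' a e = a)
    (h_left_bij : ∀ g, Function.Bijective (fun x => mul' g x))
    (h_right_bij : ∀ g, Function.Bijective (fun x => mul' x g))
    -- structure maps on G = G' × N × N
    (α β : G' × N × N → G' × N × N) (M : Set (G' × N × N))
    (mul : G' × N × N → G' × N × N → G' × N × N)
    (h_α : ∀ x s t, α (x, s, t) = (e, s, s))
    (h_β : ∀ x s t, β (x, s, t) = (e, t, t))
    (h_M : M = {g | ∃ s, g = (e, s, s)})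
    (h_mul : ∀ (x y : G') (s t r : N), mul (x, s, t) (y, t, r) = (mul' x y, s, r)) :
    -- units act as identities
    (∀ g, mul g (β g) = g ∧ mul (α g) g = g) ∧
    -- anchor conditions
    (∀ g h, β g = α h → α (mul g h) = α g ∧ β (mul g h) = β h) ∧
    -- left translations l_g : {h | α h = β g} → {h | α h = α g} are bijections
    (∀ g h h', α h = β g → α h' = β g → mul g h = mul g h' → h = h') ∧
    (∀ g k, α k = α g → ∃ h, α h = β g ∧ mul g h = k) ∧
    -- right translations r_h : {g | β g = α h} → {g | β g = β h} are bijections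
    (∀ h g g', β g = α h → β g' = α h → mul g h = mul g' h → g = g') ∧
    (∀ h k, β k = β h → ∃ g, β g = α h ∧ mul g h = k) ∧
    -- inverse loop on G' gives an I.P. loopoid structure
    (∀ inv' : G' → G',
      (∀ a b, mul' (inv' a) (mul' a b) = b) →
      (∀ a b, mul' (mul' b a) (inv' a) = b) →
      ∀ ι : G' × N × N → G' × N × N,
        (∀ x s t, ι (x, s, t) = (inv' x, t, s)) →
        (∀ g, β (ι g) = α g ∧ α (ι g) = β g) ∧
        (∀ g h, β g = α h → mul (ι g) (mul g h) = h) ∧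
        (∀ g h, β h = α g → mul (mul h g) (ι g) = h)) := by
  refine ⟨?_, ?_, ?_, ?_, ?_, ?_, ?_⟩
  · rintro ⟨x, s, t⟩
    rw [h_α, h_β, h_mul, h_mul, h_id_left, h_id_right]
    exact ⟨rfl, rfl⟩
  · rintro ⟨x, s, t⟩ ⟨y, a, b⟩ hc
    rw [h_β, h_α, Prod.ext_iff, Prod.ext_iff] at hc
    obtain ⟨-, -, rfl⟩ := hc
    rw [h_mul, h_α, h_α, h_β, h_β]
    exact ⟨rfl, rfl⟩
  · rintro ⟨x, s, t⟩ ⟨y, a, b⟩ ⟨y', a', b'⟩ h1 h2 h3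
    rw [h_α, h_β, Prod.ext_iff, Prod.ext_iff] at h1 h2
    obtain ⟨-, rfl, -⟩ := h1
    obtain ⟨-, rfl, -⟩ := h2
    rw [h_mul, h_mul, Prod.ext_iff, Prod.ext_iff] at h3
    obtain ⟨hxy, -, rfl⟩ := h3
    rw [(h_left_bij x).1 hxy]
  · rintro ⟨x, s, t⟩ ⟨z, u, v⟩ hk
    rw [h_α, h_α, Prod.ext_iff, Prod.ext_iff] at hk
    obtain ⟨-, rfl, -⟩ := hk
    obtain ⟨y, hy⟩ := (h_left_bij x).2 z
    exact ⟨(y, t, v), by rw [h_α, h_β], by rw [h_mul]; simp only at hy; rw [hy]⟩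
  · rintro ⟨y, a, b⟩ ⟨x, s, t⟩ ⟨x', s', t'⟩ h1 h2 h3
    rw [h_β, h_α, Prod.ext_iff, Prod.ext_iff] at h1 h2
    obtain ⟨-, -, rfl⟩ := h1
    obtain ⟨-, -, rfl⟩ := h2
    rw [h_mul, h_mul, Prod.ext_iff, Prod.ext_iff] at h3
    obtain ⟨hxy, rfl, -⟩ := h3
    rw [(h_right_bij y).1 hxy]
  · rintro ⟨y, a, b⟩ ⟨z, u, v⟩ hk
    rw [h_β, h_β, Prod.ext_iff, Prod.ext_iff] at hk
    obtain ⟨-, -, rfl⟩ := hk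
    obtain ⟨x, hx⟩ := (h_right_bij y).2 z
    exact ⟨(x, u, a), by rw [h_β, h_α], by rw [h_mul]; simp only at hx; rw [hx]⟩
  · intro inv' hli hri ι h_ι
    refine ⟨?_, ?_, ?_⟩
    · rintro ⟨x, s, t⟩
      rw [h_ι, h_β, h_α, h_α, h_β]
      exact ⟨rfl, rfl⟩
    · rintro ⟨x, s, t⟩ ⟨y, a, b⟩ hc
      rw [h_β, h_α, Prod.ext_iff, Prod.ext_iff] at hc
      obtain ⟨-, -, rfl⟩ := hc
      rw [h_mul, h_ι, h_mul, hli]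
    · rintro ⟨x, s, t⟩ ⟨y, a, b⟩ hc
      rw [h_β, h_α, Prod.ext_iff, Prod.ext_iff] at hc
      obtain ⟨-, -, rfl⟩ := hc
      rw [h_mul, h_ι, h_mul, hri]
end

section
/- Let φ : ℝ → ℝ be an odd bijection and let G = {((a₁,b₁),(a₂,b₂)) ∈ ℝ²×ℝ² : a₁ − a₂ = φ(b₁ − b₂)} with α(g) = (a₁,b₁), β(g) = (a₂,b₂), units {((a,b),(a,b))}, and multiplication ((a₁,b₁),(a₂,b₂)) • ((a₂,b₂),(a₃,b₃)) = ((a₁,b₁),(a₁+φ(b₃−b₁), b₃)). Then the product of two elements of G lies in G, units are two-sided identities, and the map ι_l((a₁,b₁),(a₂,b₂)) = ((a₂,b₂),(a₁,b₁)) is a left inverse: ι_l(g) • (g • h) = h for all composable g, h ∈ G. -/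
/-- Let `φ : ℝ → ℝ` be an odd bijection and
`G = {((a₁,b₁),(a₂,b₂)) : a₁ − a₂ = φ (b₁ − b₂)} ⊆ ℝ² × ℝ²`, with source
`α g = g.1`, target `β g = g.2`, units `((a,b),(a,b))`, and multiplication
`((a₁,b₁),(a₂,b₂)) • ((a₂,b₂),(a₃,b₃)) = ((a₁,b₁), (a₁ + φ(b₃ − b₁), b₃))`
(composable iff `g.2 = h.1`).  Then the product of two composable elements of `G`
lies in `G`, units are two-sided identities, and
`ι_l ((a₁,b₁),(a₂,b₂)) = ((a₂,b₂),(a₁,b₁))` is a left inverse: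
`ι_l g • (g • h) = h` for all composable `g, h ∈ G`. -/
theorem odd_bijection_left_inverse_quasiloopoid
    (φ : ℝ → ℝ) (h_odd : ∀ x, φ (-x) = - φ x) (h_bij : Function.Bijective φ)
    (G : Set ((ℝ × ℝ) × (ℝ × ℝ)))
    (h_G : G = {g | g.1.1 - g.2.1 = φ (g.1.2 - g.2.2)})
    (mul : (ℝ × ℝ) × (ℝ × ℝ) → (ℝ × ℝ) × (ℝ × ℝ) → (ℝ × ℝ) × (ℝ × ℝ))
    (h_mul : ∀ g h, mul g h = (g.1, (g.1.1 + φ (h.2.2 - g.1.2), h.2.2)))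
    (ι : (ℝ × ℝ) × (ℝ × ℝ) → (ℝ × ℝ) × (ℝ × ℝ))
    (h_ι : ∀ g, ι g = (g.2, g.1)) :
    -- closure under the partial multiplication
    (∀ g ∈ G, ∀ h ∈ G, g.2 = h.1 → mul g h ∈ G) ∧
    -- units are two-sided identities
    (∀ a b : ℝ, ∀ h ∈ G, ((a, b), (a, b)).2 = h.1 → mul ((a, b), (a, b)) h = h) ∧
    (∀ g ∈ G, mul g (g.2, g.2) = g) ∧
    -- left inverse property
    (∀ g ∈ G, ∀ h ∈ G, g.2 = h.1 → mul (ι g) (mul g h) = h) := by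
  subst h_G
  have key : ∀ x y : ℝ, φ (x - y) = -φ (y - x) := by
    intro x y
    rw [show x - y = -(y - x) by ring, h_odd]
  refine ⟨?_, ?_, ?_, ?_⟩
  · rintro ⟨⟨a1, b1⟩, a2, b2⟩ hg ⟨⟨a2', b2'⟩, a3, b3⟩ hh hc
    simp only [Set.mem_setOf_eq, h_mul] at *
    rw [key b1 b3]; ring
  · rintro a b ⟨⟨a2, b2⟩, a3, b3⟩ hh hc
    simp only [Set.mem_setOf_eq] at hh
    simp only [Prod.mk.injEq] at hc
    obtain ⟨h1, h2⟩ := hc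
    subst h1; subst h2
    simp only [h_mul, Prod.mk.injEq, and_true, true_and]
    
    rw [key b3 b]; linarith
  · rintro ⟨⟨a1, b1⟩, a2, b2⟩ hg
    simp only [Set.mem_setOf_eq] at hg
    simp only [h_mul, Prod.mk.injEq, and_true, true_and]
    
    rw [key b2 b1]; linarith
  · rintro ⟨⟨a1, b1⟩, a2, b2⟩ hg ⟨⟨a2', b2'⟩, a3, b3⟩ hh hc
    simp only [Set.mem_setOf_eq] at hg hh
    simp only [Prod.mk.injEq] at hc
    obtain ⟨h1, h2⟩ := hc
    subst h1; subst h2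
    simp only [h_mul, h_ι, Prod.mk.injEq, and_true, true_and]
    
    rw [key b3 b2]; linarith
end
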